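/- arXiv:1312.7463 — 2 statements merged into one kernel-verified Lean document; each statement's English description precedes it below -/
import Mathlib

section
/- Let Y ∈ ℝ, let f₁,…,f_K ∈ ℝ, let w₁,…,w_K ≥ 0 with Σ_{k=1}^K w_k = 1, and let f = Σ_{k=1}^K w_k f_k. Let B = [min{Y,f₁,…,f_K}, max{Y,f₁,…,f_K}] and l : ℝ × ℝ → ℝ be such that z ↦ l(Y,z) is twice differentiable with continuous second derivative on B, with m(Y) = inf_{z∈B} l''(Y,z) finite. Then Σ_{k=1}^K w_k l(Y,f_k) ≥ l(Y,Y) + l'(Y,Y)·(f − Y) + (m(Y)/2)·Σ_{k=1}^K w_k (f_k − Y)². -/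
/-- Lower bound on the weighted expert loss (intermediate step of the GAD proof). -/
theorem weighted_expert_loss_lower_bound
    (K : ℕ) (hK : 0 < K) (Y : ℝ) (f : Fin K → ℝ) (w : Fin K → ℝ)
    (hw : ∀ k, 0 ≤ w k) (hw1 : ∑ k, w k = 1)
    (F : ℝ) (hF : F = ∑ k, w k * f k)
    (lo hi : ℝ)
    (hlo : IsLeast (insert Y (Set.range f)) lo)
    (hhi : IsGreatest (insert Y (Set.range f)) hi)
    (l : ℝ → ℝ → ℝ) (l1 l2 : ℝ → ℝ)
    (hd1 : ∀ z ∈ Set.Icc lo hi, HasDerivWithinAt (l Y) (l1 z) (Set.Icc lo hi) z)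
    (hd2 : ∀ z ∈ Set.Icc lo hi, HasDerivWithinAt l1 (l2 z) (Set.Icc lo hi) z)
    (hcont : ContinuousOn l2 (Set.Icc lo hi))
    (mY : ℝ) (hmY : IsGLB (l2 '' Set.Icc lo hi) mY) :
    (∑ k, w k * l Y (f k)) ≥
      l Y Y + l1 Y * (F - Y) + (mY / 2) * ∑ k, w k * (f k - Y) ^ 2 := by
  have hYmem : Y ∈ insert Y (Set.range f) := Set.mem_insert _ _
  have hYIcc : Y ∈ Set.Icc lo hi := ⟨hlo.2 hYmem, hhi.2 hYmem⟩
  have hfIcc : ∀ k, f k ∈ Set.Icc lo hi := fun k =>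
    ⟨hlo.2 (Set.mem_insert_of_mem _ ⟨k, rfl⟩), hhi.2 (Set.mem_insert_of_mem _ ⟨k, rfl⟩)⟩
  set S := Set.Icc lo hi with hS
  set φ : ℝ → ℝ := fun z => l Y z - mY / 2 * (z - Y) ^ 2 with hφ
  set φ' : ℝ → ℝ := fun z => l1 z - mY * (z - Y) with hφ'
  -- derivative facts for φ
  have hdφ : ∀ z ∈ S, HasDerivWithinAt φ (φ' z) S z := by
    intro z hz
    have h2 : HasDerivAt (fun z => mY / 2 * (z - Y) ^ 2) (mY * (z - Y)) z := by
      have : HasDerivAt (fun z : ℝ => (z - Y) ^ 2) (2 * (z - Y) ^ 1) z := by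
        simpa using ((hasDerivAt_id z).sub_const Y).fun_pow 2
      have := this.const_mul (mY / 2)
      convert this using 1
      exacts [rfl, rfl, by ring]
    exact (hd1 z hz).sub h2.hasDerivWithinAt
  have hdφ' : ∀ z ∈ S, HasDerivWithinAt φ' (l2 z - mY) S z := by
    intro z hz
    have h2 : HasDerivAt (fun z => mY * (z - Y)) mY z := by
      simpa using ((hasDerivAt_id z).sub_const Y).const_mul mY
    exact (hd2 z hz).sub h2.hasDerivWithinAt
  have hmYlb : ∀ z ∈ S, mY ≤ l2 z := fun z hz => hmY.1 ⟨z, hz, rfl⟩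
  -- φ is convex on S
  have hconv : ConvexOn ℝ S φ := by
    apply convexOn_of_hasDerivWithinAt2_nonneg (convex_Icc lo hi)
      (f' := φ') (f'' := fun z => l2 z - mY)
    · exact fun z hz => (hdφ z hz).continuousWithinAt
    · exact fun z hz => (hdφ z (interior_subset hz)).mono interior_subset
    · exact fun z hz => (hdφ' z (interior_subset hz)).mono interior_subset
    · exact fun z hz => sub_nonneg.2 (hmYlb z (interior_subset hz))
  -- tangent line inequality at Y
  have key : ∀ z ∈ S, l Y Y + l1 Y * (z - Y) + mY / 2 * (z - Y) ^ 2 ≤ l Y z := by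
    intro z hz
    have hφ'Y : φ' Y = l1 Y := by simp [hφ']
    have htan : φ Y + φ' Y * (z - Y) ≤ φ z := by
      rcases lt_trichotomy z Y with h | h | h
      · have := hconv.slope_le_of_hasDerivWithinAt hz hYIcc h (hdφ Y hYIcc)
        rw [slope_def_field] at this
        rw [div_le_iff₀ (by linarith : 0 < Y - z)] at this
        nlinarith [this]
      · simp [h]
      · have := hconv.le_slope_of_hasDerivWithinAt hYIcc hz h (hdφ Y hYIcc)
        rw [slope_def_field] at this
        rw [le_div_iff₀ (by linarith : 0 < z - Y)] at this
        nlinarith [this]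
    have : φ Y = l Y Y := by simp [hφ]
    rw [this, hφ'Y] at htan
    simp only [hφ] at htan
    linarith
  -- sum up
  have hsum : ∀ k, w k * (l Y Y + l1 Y * (f k - Y) + mY / 2 * (f k - Y) ^ 2)
      ≤ w k * l Y (f k) := fun k =>
    mul_le_mul_of_nonneg_left (key (f k) (hfIcc k)) (hw k)
  calc l Y Y + l1 Y * (F - Y) + mY / 2 * ∑ k, w k * (f k - Y) ^ 2
      = ∑ k, w k * (l Y Y + l1 Y * (f k - Y) + mY / 2 * (f k - Y) ^ 2) := by
        rw [hF]
        rw [Finset.sum_congr rfl (fun k _ => by ring :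
          ∀ k ∈ Finset.univ, w k * (l Y Y + l1 Y * (f k - Y) + mY / 2 * (f k - Y) ^ 2)
            = l Y Y * w k + l1 Y * (w k * f k) - (l1 Y * Y) * w k + mY / 2 * (w k * (f k - Y) ^ 2))]
        simp only [Finset.sum_add_distrib, Finset.sum_sub_distrib, ← Finset.mul_sum, hw1]
        ring
    _ ≤ ∑ k, w k * l Y (f k) := Finset.sum_le_sum fun k _ => hsum k
end

section
/- Let Y ∈ ℝ, let f₁,…,f_K ∈ ℝ, let w₁,…,w_K ≥ 0 with Σ_{k=1}^K w_k = 1, and let f = Σ_{k=1}^K w_k f_k. Let B = [min{Y,f₁,…,f_K}, max{Y,f₁,…,f_K}] and l : ℝ × ℝ → ℝ be such that z ↦ l(Y,z) is twice differentiable with continuous second derivative on B, with M(Y) = sup_{z∈B} l''(Y,z) and m(Y) = inf_{z∈B} l''(Y,z) finite. Then Σ_{k=1}^K w_k l(Y,f_k) ≥ l(Y,f) − (1/2)·(M(Y) − m(Y))·Σ_{k=1}^K w_k (f_k − Y)² + (M(Y)/2)·Σ_{k=1}^K w_k (f_k − f)². -/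
/-- Tangent line inequality for a convex function on a set. -/
lemma convex_tangent_le {S : Set ℝ} {g g' : ℝ → ℝ} (hg : ConvexOn ℝ S g)
    {x y : ℝ} (hx : x ∈ S) (hy : y ∈ S) (hd : HasDerivWithinAt g (g' x) S x) :
    g x + g' x * (y - x) ≤ g y := by
  rcases lt_trichotomy x y with h | h | h
  · have := hg.le_slope_of_hasDerivWithinAt hx hy h hd
    rw [slope_def_field, le_div_iff₀ (by linarith)] at this
    linarith
  · simp [h]
  · have := hg.slope_le_of_hasDerivWithinAt hy hx h hd
    rw [slope_def_field, div_le_iff₀ (by linarith)] at this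
    nlinarith

/-- Second intermediate bound in the proof of the GAD theorem. -/
theorem weighted_expert_loss_lower_bound_two
    (K : ℕ) (hK : 0 < K) (Y : ℝ) (f : Fin K → ℝ) (w : Fin K → ℝ)
    (hw : ∀ k, 0 ≤ w k) (hw1 : ∑ k, w k = 1)
    (F : ℝ) (hF : F = ∑ k, w k * f k)
    (lo hi : ℝ)
    (hlo : IsLeast (insert Y (Set.range f)) lo)
    (hhi : IsGreatest (insert Y (Set.range f)) hi)
    (l : ℝ → ℝ → ℝ) (l1 l2 : ℝ → ℝ)
    (hd1 : ∀ z ∈ Set.Icc lo hi, HasDerivWithinAt (l Y) (l1 z) (Set.Icc lo hi) z)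
    (hd2 : ∀ z ∈ Set.Icc lo hi, HasDerivWithinAt l1 (l2 z) (Set.Icc lo hi) z)
    (hcont : ContinuousOn l2 (Set.Icc lo hi))
    (MY mY : ℝ)
    (hMY : IsLUB (l2 '' Set.Icc lo hi) MY)
    (hmY : IsGLB (l2 '' Set.Icc lo hi) mY) :
    (∑ k, w k * l Y (f k)) ≥
      l Y F - (1 / 2) * (MY - mY) * (∑ k, w k * (f k - Y) ^ 2)
        + (MY / 2) * ∑ k, w k * (f k - F) ^ 2 := by
  have hlohi : lo ≤ hi := hhi.2 hlo.1
  set S := Set.Icc lo hi with hS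
  have hfk : ∀ k, f k ∈ S := fun k =>
    ⟨hlo.2 (Set.mem_insert_of_mem _ ⟨k, rfl⟩), hhi.2 (Set.mem_insert_of_mem _ ⟨k, rfl⟩)⟩
  have hFmem : F ∈ S := by
    constructor
    · rw [hF]
      calc lo = ∑ k, w k * lo := by rw [← Finset.sum_mul, hw1, one_mul]
      _ ≤ ∑ k, w k * f k :=
          Finset.sum_le_sum fun k _ => mul_le_mul_of_nonneg_left (hfk k).1 (hw k)
    · rw [hF]
      calc ∑ k, w k * f k ≤ ∑ k, w k * hi :=
          Finset.sum_le_sum fun k _ => mul_le_mul_of_nonneg_left (hfk k).2 (hw k)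
      _ = hi := by rw [← Finset.sum_mul, hw1, one_mul]
  have hl2 : ∀ z ∈ S, mY ≤ l2 z ∧ l2 z ≤ MY := fun z hz =>
    ⟨hmY.1 ⟨z, hz, rfl⟩, hMY.1 ⟨z, hz, rfl⟩⟩
  have hmM : mY ≤ MY := le_trans (hl2 lo ⟨le_rfl, hlohi⟩).1 (hl2 lo ⟨le_rfl, hlohi⟩).2
  -- convexity of g(z) = l Y z - mY/2 * (z - F)^2
  set g : ℝ → ℝ := fun z => l Y z - mY / 2 * (z - F) ^ 2 with hg
  set g' : ℝ → ℝ := fun z => l1 z - mY * (z - F) with hg'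
  have hgd : ∀ z ∈ S, HasDerivWithinAt g (g' z) S z := by
    intro z hz
    have h2 : HasDerivWithinAt (fun z => mY / 2 * (z - F) ^ 2) (mY * (z - F)) S z := by
      have h := (((hasDerivAt_id z).sub_const F).pow 2).const_mul (mY / 2)
      have h2 : HasDerivAt (fun z => mY / 2 * (z - F) ^ 2) (mY * (z - F)) z := by
        have : mY / 2 * (2 * (id z - F) ^ (2 - 1) * 1) = mY * (z - F) := by
          simp [id]; ring
        simpa [id] using this ▸ h
      exact h2.hasDerivWithinAt
    exact (hd1 z hz).sub h2
  have hgd' : ∀ z ∈ S, HasDerivWithinAt g' (l2 z - mY) S z := by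
    intro z hz
    have h2 : HasDerivWithinAt (fun z => mY * (z - F)) mY S z := by
      simpa using (((hasDerivAt_id z).sub_const F).const_mul mY).hasDerivWithinAt
    exact (hd2 z hz).sub h2
  have hconv : ConvexOn ℝ S g := by
    apply convexOn_of_hasDerivWithinAt2_nonneg (convex_Icc lo hi)
      (f' := g') (f'' := fun z => l2 z - mY)
    · intro z hz
      exact ((hgd z hz).differentiableWithinAt).continuousWithinAt
    · intro z hz
      exact (hgd z (interior_subset hz)).mono interior_subset
    · intro z hz
      exact (hgd' z (interior_subset hz)).mono interior_subset
    · intro z hz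
      linarith [(hl2 z (interior_subset hz)).1]
  -- tangent line at F
  have htan : ∀ k, l Y F + l1 F * (f k - F) + mY / 2 * (f k - F) ^ 2 ≤ l Y (f k) := by
    intro k
    have := convex_tangent_le hconv hFmem (hfk k) (hgd F hFmem)
    simp only [hg, hg'] at this
    nlinarith [this]
  -- sum the tangent inequality
  have hsum0 : ∑ k, w k * (f k - F) = 0 := by
    simp [mul_sub, Finset.sum_sub_distrib, ← hF, ← Finset.sum_mul, hw1]
  have hmain : l Y F + mY / 2 * ∑ k, w k * (f k - F) ^ 2 ≤ ∑ k, w k * l Y (f k) := by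
    have h1 : ∑ k, w k * (l Y F + l1 F * (f k - F) + mY / 2 * (f k - F) ^ 2)
        ≤ ∑ k, w k * l Y (f k) :=
      Finset.sum_le_sum fun k _ => mul_le_mul_of_nonneg_left (htan k) (hw k)
    calc l Y F + mY / 2 * ∑ k, w k * (f k - F) ^ 2
        = ∑ k, w k * (l Y F + l1 F * (f k - F) + mY / 2 * (f k - F) ^ 2) := by
          rw [Finset.sum_congr rfl (fun k _ => by ring :
            ∀ k ∈ Finset.univ, w k * (l Y F + l1 F * (f k - F) + mY / 2 * (f k - F) ^ 2)
              = l Y F * w k + l1 F * (w k * (f k - F)) + mY / 2 * (w k * (f k - F) ^ 2))]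
          rw [Finset.sum_add_distrib, Finset.sum_add_distrib, ← Finset.mul_sum,
            ← Finset.mul_sum, ← Finset.mul_sum, hw1, hsum0]
          ring
      _ ≤ _ := h1
  -- variance decomposition
  have hvar : ∑ k, w k * (f k - Y) ^ 2 = (∑ k, w k * (f k - F) ^ 2) + (F - Y) ^ 2 := by
    have : ∀ k ∈ Finset.univ, w k * (f k - Y) ^ 2
        = w k * (f k - F) ^ 2 + 2 * (F - Y) * (w k * f k) + (Y ^ 2 - F ^ 2) * w k := by
      intro k _; ring
    rw [Finset.sum_congr rfl this, Finset.sum_add_distrib, Finset.sum_add_distrib,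
      ← Finset.mul_sum, ← Finset.mul_sum, ← hF, hw1]
    ring
  have hSF : 0 ≤ ∑ k, w k * (f k - F) ^ 2 :=
    Finset.sum_nonneg fun k _ => mul_nonneg (hw k) (sq_nonneg _)
  rw [hvar]
  nlinarith [sq_nonneg (F - Y), hmain]
end
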